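/- Every open subgroup of a topologically finitely generated profinite group is itself topologically finitely generated. -/

import Mathlib

/-- Every open subgroup of a topologically finitely generated profinite group is
itself topologically finitely generated. -/
theorem openSubgroup_topologically_finitelyGenerated
    (G : Type*) [Group G] [TopologicalSpace G] [IsTopologicalGroup G]
    [CompactSpace G] [T2Space G] [TotallyDisconnectedSpace G]
    (hfg : ∃ T : Finset G, (Subgroup.closure (T : Set G)).topologicalClosure = ⊤)
    (H : Subgroup G) (hH : IsOpen (H : Set G)) :
    ∃ T : Finset G, (Subgroup.closure (T : Set G)).topologicalClosure = H := by
  obtain ⟨T, hT⟩ := hfg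
  set D : Subgroup G := Subgroup.closure (T : Set G) with hD
  have hdense : Dense (D : Set G) := by
    have h1 : closure (D : Set G) = Set.univ := congrArg (fun K : Subgroup G => (K : Set G)) hT
    rw [dense_iff_closure_eq, h1]
  -- H has finite index
  have hfin : Finite (G ⧸ H) := Subgroup.quotient_finite_of_isOpen H hH
  have hHfi : H.FiniteIndex := Subgroup.finiteIndex_of_finite_quotient (H := H)
  -- D is a finitely generated group
  have hDfg : Group.FG D := (Group.fg_iff_subgroup_fg D).mpr ⟨T, rfl⟩
  -- hence so is H.subgroupOf D (finite index, Schreier)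
  have hKfi : (H.subgroupOf D).FiniteIndex := Subgroup.instFiniteIndex_subgroupOf H D
  have hKfg : (H.subgroupOf D).FG :=
    (Group.fg_iff_subgroup_fg _).mp (Subgroup.fg_of_index_ne_zero _)
  obtain ⟨S, hS⟩ := hKfg
  classical
  refine ⟨S.image D.subtype, ?_⟩
  have hmap : Subgroup.closure ((S.image D.subtype : Finset G) : Set G) = H ⊓ D := by
    rw [Finset.coe_image, ← MonoidHom.map_closure, hS, Subgroup.subgroupOf_map_subtype]
  rw [hmap]
  apply SetLike.coe_injective
  show closure ((H ⊓ D : Subgroup G) : Set G) = (H : Set G)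
  apply le_antisymm
  · have : ((H ⊓ D : Subgroup G) : Set G) ⊆ (H : Set G) := by
      intro x hx
      exact (Subgroup.mem_inf.mp hx).1
    calc closure ((H ⊓ D : Subgroup G) : Set G) ⊆ closure (H : Set G) := closure_mono this
      _ = (H : Set G) := (H.isClosed_of_isOpen hH).closure_eq
  · intro x hx
    have hsub : (H : Set G) ⊆ closure ((H : Set G) ∩ (D : Set G)) :=
      hdense.open_subset_closure_inter hH
    have : ((H ⊓ D : Subgroup G) : Set G) = (H : Set G) ∩ (D : Set G) := rfl
    rw [this]
    exact hsub hx
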